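/- Let F_{n,k} be the number of Frobenius seaweed data for sp_{2n} (up to swapping the two compositions) with exactly k central arcs. For a fixed m ∈ ℕ, the numbers F_{n,n−m} stabilize for n ≥ 2m+1: F_{n,n−m} = F_{2m+1,m+1} for all n ≥ 2m+1. -/

import Mathlib

/-- The arc of a block starting at offset `o` of size `m`: the `k`-th nested arc
joins vertices `o+k` and `o+(m-1-k)` (0-based), for `2k+1 < m`. -/
def inBlockArc (o m i j : ℕ) : Prop :=
  ∃ k : ℕ, 2 * k + 1 < m ∧ i = o + k ∧ j = o + (m - 1 - k)

/-- Arcs determined by a composition, drawn block by block starting at offset `o`. -/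
def arcs : List ℕ → ℕ → ℕ → ℕ → Prop
  | [], _, _, _ => False
  | m :: rest, o, i, j => inBlockArc o m i j ∨ arcs rest (o + m) i j

/-- The type-A meander graph of the pair of compositions `(a | b)` on `n` vertices
(0-based): arcs of `a` above the line, arcs of `b` below. -/
def meanderA (n : ℕ) (a b : List ℕ) : SimpleGraph (Fin n) where
  Adj i j := i ≠ j ∧ (arcs a 0 i.val j.val ∨ arcs a 0 j.val i.val ∨
      arcs b 0 i.val j.val ∨ arcs b 0 j.val i.val)
  symm := by
    constructor
    intro i j h
    exact ⟨Ne.symm h.1, by tauto⟩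
  loopless := by
    constructor
    intro i h
    exact h.1 rfl

/-- The symmetric composition `(a₁,…,a_s, 2d, a_s,…,a₁)` of `2n`, where
`d = n - Σ aᵢ` (a zero middle part is omitted). -/
def tildeComp (n : ℕ) (a : List ℕ) : List ℕ :=
  (a ++ [2 * (n - a.sum)] ++ a.reverse).filter (fun x => x != 0)

/-- The type-C meander graph `Γ^C_n(a|b)` on `2n` vertices. -/
def meanderC (n : ℕ) (a b : List ℕ) : SimpleGraph (Fin (2 * n)) :=
  meanderA (2 * n) (tildeComp n a) (tildeComp n b)

/-- The reflection `σ` sending vertex `i` to `2n + 1 - i` (0-based: `i ↦ 2n - 1 - i`). -/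
def sigmaRefl (n : ℕ) : Fin (2 * n) → Fin (2 * n) :=
  fun i => ⟨2 * n - 1 - i.val, by have := i.isLt; omega⟩

/-- A connected component is a cycle if every vertex in it has degree 2. -/
def IsCycleComp {V : Type*} (G : SimpleGraph V) (c : G.ConnectedComponent) : Prop :=
  ∀ v, G.connectedComponentMk v = c → (G.neighborSet v).ncard = 2

/-- A connected component is a segment if it is not a cycle. -/
def IsSegmentComp {V : Type*} (G : SimpleGraph V) (c : G.ConnectedComponent) : Prop :=
  ¬ IsCycleComp G c

/-- The number of cycles of a graph. -/
noncomputable def numCycles {V : Type*} (G : SimpleGraph V) : ℕ :=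
  {c : G.ConnectedComponent | IsCycleComp G c}.ncard

/-- The number of segments of a graph. -/
noncomputable def numSegments {V : Type*} (G : SimpleGraph V) : ℕ :=
  {c : G.ConnectedComponent | IsSegmentComp G c}.ncard

/-- A component of a type-C meander graph is `σ`-stable if `σ` maps it to itself. -/
def SigmaStable (n : ℕ) (G : SimpleGraph (Fin (2 * n))) (c : G.ConnectedComponent) : Prop :=
  ∀ v, G.connectedComponentMk v = c → G.connectedComponentMk (sigmaRefl n v) = c

/-- The number of non-`σ`-stable segments of `Γ^C_n(a|b)`. -/
noncomputable def numNonStableSegments (n : ℕ) (a b : List ℕ) : ℕ :=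
  {c : (meanderC n a b).ConnectedComponent |
    IsSegmentComp (meanderC n a b) c ∧ ¬ SigmaStable n (meanderC n a b) c}.ncard

/-- The topological index `T_n(a|b)` of `Γ^C_n(a|b)`:
(number of cycles) + ½·(number of non-`σ`-stable segments). -/
noncomputable def topIndex (n : ℕ) (a b : List ℕ) : ℚ :=
  (numCycles (meanderC n a b) : ℚ) + (numNonStableSegments n a b : ℚ) / 2

/-- A composition: all parts are positive. -/
def IsComposition (a : List ℕ) : Prop := ∀ x ∈ a, 0 < x

/-- A Frobenius seaweed datum for `sp_{2n}` whose meander graph has `k` central arcs: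
one of the compositions sums to `n`, the other to `n - k`, and `T_n(a|b) = 0`. -/
def FrobDatum (n k : ℕ) (a b : List ℕ) : Prop :=
  IsComposition a ∧ IsComposition b ∧ 1 ≤ k ∧ k ≤ n ∧
    ((a.sum = n - k ∧ b.sum = n) ∨ (b.sum = n - k ∧ a.sum = n)) ∧
    topIndex n a b = 0

/-- Frobenius seaweed data with `k` central arcs, up to swapping the two compositions. -/
def FSet (n k : ℕ) : Set (Sym2 (List ℕ)) :=
  {s | ∃ a b, s = s(a, b) ∧ FrobDatum n k a b}

/-- The number `F_{n,k}` of Frobenius seaweed data with `k` central arcs, up to swap. -/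
noncomputable def Fcount (n k : ℕ) : ℕ := (FSet n k).ncard

lemma inBlockArc_bounds {o m i j : ℕ} (h : inBlockArc o m i j) :
    o ≤ i ∧ i < j ∧ j < o + m := by
  obtain ⟨k, hk, hi, hj⟩ := h; omega

lemma arcs_bounds {l : List ℕ} {o i j : ℕ} (h : arcs l o i j) :
    o ≤ i ∧ i < j ∧ j < o + l.sum := by
  induction l generalizing o with
  | nil => exact h.elim
  | cons c t ih =>
    rcases h with h | h
    · have := inBlockArc_bounds h; simp only [List.sum_cons]; omega
    · have := ih h; simp only [List.sum_cons]; omega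

lemma arcs_append {l₁ l₂ : List ℕ} {o i j : ℕ} :
    arcs (l₁ ++ l₂) o i j ↔ arcs l₁ o i j ∨ arcs l₂ (o + l₁.sum) i j := by
  induction l₁ generalizing o with
  | nil => simp [arcs]
  | cons c t ih =>
    show inBlockArc o c i j ∨ arcs (t ++ l₂) (o + c) i j ↔
      (inBlockArc o c i j ∨ arcs t (o + c) i j) ∨ _
    rw [ih, show o + c + t.sum = o + (c :: t).sum by simp; omega]
    tauto

lemma arcs_shift {l : List ℕ} {o c i j : ℕ} :
    arcs l (o + c) i j ↔ ∃ p q, i = p + c ∧ j = q + c ∧ arcs l o p q := by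
  induction l generalizing o with
  | nil => simp [arcs]
  | cons d t ih =>
    simp only [arcs]
    constructor
    · rintro (⟨k, hk, hi, hj⟩ | h)
      · exact ⟨o + k, o + (d - 1 - k), by omega, by omega, Or.inl ⟨k, hk, rfl, rfl⟩⟩
      · rw [show o + c + d = o + d + c by omega] at h
        obtain ⟨p, q, hp, hq, h⟩ := ih.mp h
        exact ⟨p, q, hp, hq, Or.inr h⟩
    · rintro ⟨p, q, hp, hq, ⟨k, hk, hp', hq'⟩ | h⟩
      · exact Or.inl ⟨k, hk, by omega, by omega⟩
      · refine Or.inr ?_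
        rw [show o + c + d = o + d + c by omega]
        exact ih.mpr ⟨p, q, hp, hq, h⟩

lemma inBlockArc_unique {o m i j i' j' : ℕ} (h : inBlockArc o m i j)
    (h' : inBlockArc o m i' j') (hv : i = i' ∨ i = j' ∨ j = i' ∨ j = j') :
    i = i' ∧ j = j' := by
  obtain ⟨k, hk, hi, hj⟩ := h; obtain ⟨k', hk', hi', hj'⟩ := h'; omega

lemma arcs_unique {l : List ℕ} {o i j i' j' : ℕ} (h : arcs l o i j)
    (h' : arcs l o i' j') (hv : i = i' ∨ i = j' ∨ j = i' ∨ j = j') :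
    i = i' ∧ j = j' := by
  induction l generalizing o with
  | nil => exact h.elim
  | cons c t ih =>
    rcases h with h | h <;> rcases h' with h' | h'
    · exact inBlockArc_unique h h' hv
    · have b1 := inBlockArc_bounds h; have b2 := arcs_bounds h'; omega
    · have b1 := arcs_bounds h; have b2 := inBlockArc_bounds h'; omega
    · exact ih h h'

/-! ### tildeComp computations -/

lemma filter_ne_zero_eq {c : List ℕ} (hc : IsComposition c) :
    c.filter (fun x => x != 0) = c :=
  List.filter_eq_self.mpr (fun x hx => by simpa using (hc x hx).ne')

lemma isComposition_reverse {c : List ℕ} (hc : IsComposition c) : IsComposition c.reverse :=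
  fun x hx => hc x (List.mem_reverse.mp hx)

lemma tildeComp_eq_self_append {n : ℕ} {c : List ℕ} (hc : IsComposition c)
    (hs : c.sum = n) : tildeComp n c = c ++ c.reverse := by
  unfold tildeComp
  rw [hs, Nat.sub_self, Nat.mul_zero, List.filter_append, List.filter_append,
    filter_ne_zero_eq hc, filter_ne_zero_eq (isComposition_reverse hc)]
  simp

lemma tildeComp_eq_mid {n m : ℕ} {c : List ℕ} (hc : IsComposition c)
    (hs : c.sum = m) (hm : m < n) : tildeComp n c = c ++ [2 * (n - m)] ++ c.reverse := by
  unfold tildeComp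
  rw [hs, List.filter_append, List.filter_append,
    filter_ne_zero_eq hc, filter_ne_zero_eq (isComposition_reverse hc)]
  congr 1
  congr 1
  have : (2 * (n - m) != 0) = true := by simpa using by omega
  simp [List.filter_cons, this]

lemma meanderC_comm (n : ℕ) (a b : List ℕ) : meanderC n a b = meanderC n b a := by
  unfold meanderC meanderA
  congr 1
  ext i j
  tauto

lemma topIndex_comm (n : ℕ) (a b : List ℕ) : topIndex n a b = topIndex n b a := by
  unfold topIndex numNonStableSegments numCycles
  rw [meanderC_comm]

lemma FrobDatum_comm {n k : ℕ} {a b : List ℕ} (h : FrobDatum n k a b) :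
    FrobDatum n k b a := by
  obtain ⟨h1, h2, h3, h4, h5, h6⟩ := h
  exact ⟨h2, h1, h3, h4, by tauto, by rw [topIndex_comm]; exact h6⟩

/-! ### Generic transfer machinery -/

section Transfer

open SimpleGraph

variable {V W : Type*} {G : SimpleGraph V} {H : SimpleGraph W}

/-- Walks starting in a set closed under adjacency stay in it. -/
lemma reachable_closed {S : Set V} (hS : ∀ v ∈ S, ∀ w, G.Adj v w → w ∈ S)
    {v w : V} (hv : v ∈ S) (h : G.Reachable v w) : w ∈ S := by
  obtain ⟨p⟩ := h
  induction p with
  | nil => exact hv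
  | cons h p ih => exact ih (hS _ hv _ h)

/-- The graph homomorphism induced by an adjacency-reflecting map. -/
def cHom (g : W → V) (hadj : ∀ u v, H.Adj u v ↔ G.Adj (g u) (g v)) : H →g G :=
  ⟨g, fun {a b} h => (hadj a b).1 h⟩

variable (g : W → V) (hinj : Function.Injective g)
  (hadj : ∀ u v, H.Adj u v ↔ G.Adj (g u) (g v))
  (hclosed : ∀ v w, G.Adj (g v) w → ∃ u, w = g u)

include hclosed in
lemma range_closed : ∀ v ∈ Set.range g, ∀ w, G.Adj v w → w ∈ Set.range g := by
  rintro v ⟨u, rfl⟩ w hw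
  obtain ⟨u', rfl⟩ := hclosed _ _ hw
  exact ⟨u', rfl⟩

include hinj hadj hclosed in
lemma reachable_iff {u v : W} : H.Reachable u v ↔ G.Reachable (g u) (g v) := by
  constructor
  · rintro ⟨p⟩
    exact ⟨p.map (cHom g hadj)⟩
  · intro h
    obtain ⟨p⟩ := h
    generalize hx : g u = x at p
    generalize hy : g v = y at p
    induction p generalizing u with
    | nil => exact (hinj (hx.trans hy.symm)) ▸ Reachable.refl _
    | cons h p ih =>
      subst hx
      obtain ⟨u', rfl⟩ := hclosed _ _ h
      exact Reachable.trans ⟨SimpleGraph.Walk.cons ((hadj _ _).2 h) SimpleGraph.Walk.nil⟩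
        (ih rfl hy)

include hinj hadj hclosed in
lemma cmap_inj : Function.Injective
    (SimpleGraph.ConnectedComponent.map (cHom g hadj)) := by
  intro c d
  refine SimpleGraph.ConnectedComponent.ind₂ (fun u v h => ?_) c d
  simp only [SimpleGraph.ConnectedComponent.map_mk] at h
  exact ConnectedComponent.sound ((reachable_iff g hinj hadj hclosed).2
    (ConnectedComponent.exact h))

include hinj hadj hclosed in
lemma mem_cmap {u : W} {w : V}
    (h : G.connectedComponentMk w = (H.connectedComponentMk u).map (cHom g hadj)) :
    ∃ v : W, w = g v ∧ H.connectedComponentMk v = H.connectedComponentMk u := by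
  rw [SimpleGraph.ConnectedComponent.map_mk] at h
  have hr : G.Reachable (g u) w := ConnectedComponent.exact h.symm
  have hw : w ∈ Set.range g :=
    reachable_closed (range_closed g hclosed) ⟨u, rfl⟩ hr
  obtain ⟨v, rfl⟩ := hw
  exact ⟨v, rfl, ConnectedComponent.sound
    ((reachable_iff g hinj hadj hclosed).mpr hr).symm⟩

include hadj hclosed in
lemma neighborSet_cmap (v : W) : G.neighborSet (g v) = g '' H.neighborSet v := by
  ext w
  simp only [SimpleGraph.mem_neighborSet, Set.mem_image]
  constructor
  · intro h
    obtain ⟨u, rfl⟩ := hclosed _ _ h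
    exact ⟨u, (hadj _ _).2 h, rfl⟩
  · rintro ⟨u, hu, rfl⟩
    exact (hadj _ _).1 hu

include hinj hadj hclosed in
lemma isCycleComp_cmap (c : H.ConnectedComponent) :
    IsCycleComp G (c.map (cHom g hadj)) ↔ IsCycleComp H c := by
  refine SimpleGraph.ConnectedComponent.ind (fun u => ?_) c
  constructor
  · intro hcyc v hv
    have h1 : (H.connectedComponentMk v).map (cHom g hadj) =
        (H.connectedComponentMk u).map (cHom g hadj) := by rw [hv]
    have := hcyc (g v) h1
    rwa [neighborSet_cmap g hadj hclosed,
      Set.ncard_image_of_injective _ hinj] at this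
  · intro hcyc w hw
    obtain ⟨v, rfl, hv⟩ := mem_cmap g hinj hadj hclosed hw
    rw [neighborSet_cmap g hadj hclosed, Set.ncard_image_of_injective _ hinj]
    exact hcyc v hv

/-- Generic version of σ-stability. -/
def Stab {V : Type*} (G : SimpleGraph V) (σV : V → V) (c : G.ConnectedComponent) : Prop :=
  ∀ v, G.connectedComponentMk v = c → G.connectedComponentMk (σV v) = c

variable {σV : V → V} {σW : W → W} (hσ : ∀ v, σV (g v) = g (σW v))

include hinj hadj hclosed hσ in
lemma stab_cmap (c : H.ConnectedComponent) :
    Stab G σV (c.map (cHom g hadj)) ↔ Stab H σW c := by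
  refine SimpleGraph.ConnectedComponent.ind (fun u => ?_) c
  constructor
  · intro hst v hv
    have h1 : (H.connectedComponentMk v).map (cHom g hadj) =
        (H.connectedComponentMk u).map (cHom g hadj) := by rw [hv]
    have h2 := hst (g v) h1
    rw [hσ] at h2
    obtain ⟨v', hv', hveq⟩ := mem_cmap g hinj hadj hclosed h2
    rw [← hinj hv'] at hveq
    exact hveq
  · intro hst w hw
    obtain ⟨v, rfl, hv⟩ := mem_cmap g hinj hadj hclosed hw
    rw [hσ, ← hw]
    have h2 : H.connectedComponentMk (σW v) = H.connectedComponentMk v :=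
      (hst v hv).trans hv.symm
    show G.connectedComponentMk (g (σW v)) = (H.connectedComponentMk v).map (cHom g hadj)
    rw [SimpleGraph.ConnectedComponent.map_mk]
    exact ConnectedComponent.sound ((reachable_iff g hinj hadj hclosed).mp
      (ConnectedComponent.exact h2))

include hinj hadj hclosed in
lemma cycles_transfer
    (hout : ∀ x : V, x ∉ Set.range g → (G.neighborSet x).ncard ≠ 2) :
    numCycles G = numCycles H := by
  classical
  unfold numCycles
  rw [show {c : G.ConnectedComponent | IsCycleComp G c} =
      (SimpleGraph.ConnectedComponent.map (cHom g hadj)) ''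
        {c : H.ConnectedComponent | IsCycleComp H c} from ?_]
  · rw [Set.ncard_image_of_injective _ (cmap_inj g hinj hadj hclosed)]
  · ext c
    simp only [Set.mem_setOf_eq, Set.mem_image]
    constructor
    · intro hc
      refine SimpleGraph.ConnectedComponent.ind (fun x hc => ?_) c hc
      by_cases hx : x ∈ Set.range g
      · obtain ⟨u, rfl⟩ := hx
        refine ⟨H.connectedComponentMk u, ?_, rfl⟩
        rw [← isCycleComp_cmap g hinj hadj hclosed]
        exact hc
      · exact absurd (hc x rfl) (hout x hx)
    · rintro ⟨d, hd, rfl⟩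
      exact (isCycleComp_cmap g hinj hadj hclosed d).2 hd

include hinj hadj hclosed hσ in
lemma nonstable_transfer
    (hout : ∀ x : V, x ∉ Set.range g → Stab G σV (G.connectedComponentMk x)) :
    {c : G.ConnectedComponent | IsSegmentComp G c ∧ ¬ Stab G σV c}.ncard =
    {c : H.ConnectedComponent | IsSegmentComp H c ∧ ¬ Stab H σW c}.ncard := by
  classical
  rw [show {c : G.ConnectedComponent | IsSegmentComp G c ∧ ¬ Stab G σV c} =
      (SimpleGraph.ConnectedComponent.map (cHom g hadj)) ''
        {c : H.ConnectedComponent | IsSegmentComp H c ∧ ¬ Stab H σW c} from ?_]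
  · rw [Set.ncard_image_of_injective _ (cmap_inj g hinj hadj hclosed)]
  · ext c
    simp only [Set.mem_setOf_eq, Set.mem_image]
    constructor
    · rintro ⟨hseg, hstab⟩
      refine SimpleGraph.ConnectedComponent.ind
        (fun x hseg hstab => ?_) c hseg hstab
      by_cases hx : x ∈ Set.range g
      · obtain ⟨u, rfl⟩ := hx
        refine ⟨H.connectedComponentMk u, ⟨?_, ?_⟩, rfl⟩
        · intro h
          exact hseg ((isCycleComp_cmap g hinj hadj hclosed _).2 h)
        · intro h
          exact hstab ((stab_cmap g hinj hadj hclosed hσ _).2 h)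
      · exact absurd (hout x hx) hstab
    · rintro ⟨d, ⟨hseg, hstab⟩, rfl⟩
      exact ⟨fun h => hseg ((isCycleComp_cmap g hinj hadj hclosed _).1 h),
        fun h => hstab ((stab_cmap g hinj hadj hclosed hσ _).1 h)⟩

end Transfer

/-! ### Decompositions of meander arcs -/

lemma inBlockArc_one {o x y : ℕ} : ¬ inBlockArc o 1 x y := by
  rintro ⟨k, hk, _, _⟩; omega

lemma arcs_singleton {c o x y : ℕ} : arcs [c] o x y ↔ inBlockArc o c x y := by
  simp [arcs]

lemma arcsA_decomp {n m : ℕ} {a : List ℕ} (ha : IsComposition a) (hsa : a.sum = m)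
    (hm : m < n) {x y : ℕ} :
    arcs (tildeComp n a) 0 x y ↔
      (arcs a 0 x y ∨ inBlockArc m (2*(n-m)) x y ∨ arcs a.reverse (2*n - m) x y) := by
  rw [tildeComp_eq_mid ha hsa hm, arcs_append, arcs_append, arcs_singleton]
  have h1 : 0 + a.sum = m := by omega
  have h2 : 0 + (a ++ [2 * (n - m)]).sum = 2*n - m := by
    simp [List.sum_append, hsa]; omega
  rw [h1, h2, or_assoc]

lemma arcsB_decomp {n : ℕ} {b : List ℕ} (hb : IsComposition b) (hsb : b.sum = n)
    {x y : ℕ} :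
    arcs (tildeComp n b) 0 x y ↔ (arcs b 0 x y ∨ arcs b.reverse n x y) := by
  rw [tildeComp_eq_self_append hb hsb, arcs_append]
  rw [show 0 + b.sum = n by omega]

section Step

variable {N m : ℕ} {a b' : List ℕ}
variable (ha : IsComposition a) (hb : IsComposition b')
  (hsa : a.sum = m) (hsb : b'.sum = N - 1) (hN : m + 2 ≤ N)

/-- The index shift skipping the two new central vertices. -/
def eshift (N x : ℕ) : ℕ := if x < N - 1 then x else x + 2

lemma eshift_lt {N x : ℕ} (h : x < N - 1) : eshift N x = x := if_pos h
lemma eshift_ge {N x : ℕ} (h : ¬ x < N - 1) : eshift N x = x + 2 := if_neg h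
lemma eshift_ne {N x : ℕ} (hN : 1 ≤ N) : eshift N x ≠ N - 1 ∧ eshift N x ≠ N := by
  unfold eshift; split <;> omega

include ha hsa hN in
lemma arcsA_step {x y : ℕ} :
    arcs (tildeComp (N-1) a) 0 x y ↔
      arcs (tildeComp N a) 0 (eshift N x) (eshift N y) := by
  have hrs : a.reverse.sum = m := by rw [List.sum_reverse]; exact hsa
  rw [arcsA_decomp ha hsa (by omega : m < N - 1), arcsA_decomp ha hsa (by omega : m < N)]
  constructor
  · rintro (h | ⟨k, hk, hx, hy⟩ | h)
    · have hbd := arcs_bounds h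
      rw [hsa] at hbd
      rw [eshift_lt (by omega), eshift_lt (by omega)]
      exact Or.inl h
    · refine Or.inr (Or.inl ⟨k, by omega, ?_, ?_⟩)
      · rw [eshift_lt (by omega)]; omega
      · rw [eshift_ge (by omega)]; omega
    · have hbd := arcs_bounds h
      rw [hrs] at hbd
      rw [show 2*(N-1) - m = (2*N - m - 2) by omega] at h
      rw [eshift_ge (by omega), eshift_ge (by omega)]
      rw [show 2*N - m = (2*N - m - 2) + 2 by omega]
      exact Or.inr (Or.inr (arcs_shift.mpr ⟨x, y, rfl, rfl, h⟩))
  · rintro (h | ⟨k, hk, hx, hy⟩ | h)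
    · have hbd := arcs_bounds h
      rw [hsa] at hbd
      have hx : eshift N x = x := by
        by_cases h' : x < N - 1
        · exact eshift_lt h'
        · exfalso; rw [eshift_ge h'] at hbd; omega
      have hy : eshift N y = y := by
        by_cases h' : y < N - 1
        · exact eshift_lt h'
        · exfalso; rw [eshift_ge h'] at hbd; omega
      rw [hx, hy] at h; exact Or.inl h
    · have hnex := eshift_ne (N := N) (x := x) (by omega)
      have hney := eshift_ne (N := N) (x := y) (by omega)
      refine Or.inr (Or.inl ⟨k, by omega, ?_, ?_⟩)
      · by_cases h' : x < N - 1
        · rw [eshift_lt h'] at hx; omega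
        · rw [eshift_ge h'] at hx; omega
      · by_cases h' : y < N - 1
        · rw [eshift_lt h'] at hy; omega
        · rw [eshift_ge h'] at hy; omega
    · rw [show 2*N - m = (2*N - m - 2) + 2 by omega] at h
      obtain ⟨p, q, hp, hq, h⟩ := arcs_shift.mp h
      have hbd := arcs_bounds h
      rw [hrs] at hbd
      have hx : x = p := by
        by_cases h' : x < N - 1
        · rw [eshift_lt h'] at hp; omega
        · rw [eshift_ge h'] at hp; omega
      have hy : y = q := by
        by_cases h' : y < N - 1
        · rw [eshift_lt h'] at hq; omega
        · rw [eshift_ge h'] at hq; omega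
      subst hx; subst hy
      rw [show 2*(N-1) - m = (2*N - m - 2) by omega]
      exact Or.inr (Or.inr h)

include hb hsb hN in
lemma arcsB_step {x y : ℕ} :
    arcs (tildeComp (N-1) b') 0 x y ↔
      arcs (tildeComp N (b' ++ [1])) 0 (eshift N x) (eshift N y) := by
  have hb1 : IsComposition (b' ++ [1]) := by
    intro z hz
    rcases List.mem_append.mp hz with h | h
    · exact hb z h
    · simp at h; omega
  have hs1 : (b' ++ [1]).sum = N := by simp [List.sum_append, hsb]; omega
  have hrs : b'.reverse.sum = N - 1 := by rw [List.sum_reverse]; exact hsb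
  rw [arcsB_decomp hb hsb (x := x) (y := y), arcsB_decomp hb1 hs1]
  have hrev : (b' ++ [1]).reverse = 1 :: b'.reverse := by simp
  rw [hrev, arcs_append]
  show _ ↔ (arcs b' 0 _ _ ∨ arcs [1] (0 + b'.sum) _ _) ∨
    inBlockArc N 1 _ _ ∨ arcs b'.reverse (N + 1) _ _
  rw [arcs_singleton, show (0 : ℕ) + b'.sum = N - 1 by omega]
  constructor
  · rintro (h | h)
    · have hbd := arcs_bounds h
      rw [hsb] at hbd
      rw [eshift_lt (by omega), eshift_lt (by omega)]
      exact Or.inl (Or.inl h)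
    · have hbd := arcs_bounds h
      rw [hrs] at hbd
      rw [eshift_ge (by omega), eshift_ge (by omega)]
      rw [show N + 1 = (N - 1) + 2 by omega]
      exact Or.inr (Or.inr (arcs_shift.mpr ⟨x, y, rfl, rfl, h⟩))
  · rintro ((h | h) | h | h)
    · have hbd := arcs_bounds h
      rw [hsb] at hbd
      have hx : eshift N x = x := by
        by_cases h' : x < N - 1
        · exact eshift_lt h'
        · exfalso; rw [eshift_ge h'] at hbd; omega
      have hy : eshift N y = y := by
        by_cases h' : y < N - 1
        · exact eshift_lt h'
        · exfalso; rw [eshift_ge h'] at hbd; omega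
      rw [hx, hy] at h; exact Or.inl h
    · exact absurd h inBlockArc_one
    · exact absurd h inBlockArc_one
    · rw [show N + 1 = (N - 1) + 2 by omega] at h
      obtain ⟨p, q, hp, hq, h⟩ := arcs_shift.mp h
      have hbd := arcs_bounds h
      rw [hrs] at hbd
      have hx : x = p := by
        by_cases h' : x < N - 1
        · rw [eshift_lt h'] at hp; omega
        · rw [eshift_ge h'] at hp; omega
      have hy : y = q := by
        by_cases h' : y < N - 1
        · rw [eshift_lt h'] at hq; omega
        · rw [eshift_ge h'] at hq; omega
      subst hx; subst hy
      exact Or.inr h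

end Step

/-- The embedding of vertices. -/
def gmap (N : ℕ) : Fin (2*(N-1)) → Fin (2*N) :=
  fun v => ⟨eshift N v.val, by have := v.isLt; unfold eshift; split <;> omega⟩

lemma gmap_inj (N : ℕ) : Function.Injective (gmap N) := by
  intro u v h
  apply Fin.ext
  have h' : eshift N u.val = eshift N v.val := congrArg Fin.val h
  unfold eshift at h'
  split at h' <;> split at h' <;> omega

lemma gmap_ne_center {N : ℕ} (v : Fin (2*(N-1))) :
    (gmap N v).val ≠ N - 1 ∧ (gmap N v).val ≠ N := by
  show eshift N v.val ≠ N - 1 ∧ eshift N v.val ≠ N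
  unfold eshift; split <;> omega

lemma mem_range_gmap {N : ℕ} (hN : 2 ≤ N) (x : Fin (2*N)) (h1 : x.val ≠ N - 1)
    (h2 : x.val ≠ N) : ∃ u, x = gmap N u := by
  have hlt := x.isLt
  by_cases h : x.val < N - 1
  · exact ⟨⟨x.val, by omega⟩, Fin.ext (by simp [gmap, eshift_lt h])⟩
  · refine ⟨⟨x.val - 2, by omega⟩, Fin.ext ?_⟩
    show x.val = eshift N (x.val - 2)
    rw [eshift_ge (by omega)]
    omega


lemma sigma_gmap {N : ℕ} (hN2 : 2 ≤ N) (v : Fin (2*(N-1))) :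
    sigmaRefl N (gmap N v) = gmap N (sigmaRefl (N-1) v) := by
  apply Fin.ext
  have hlt := v.isLt
  show 2*N - 1 - eshift N v.val = eshift N (2*(N-1) - 1 - v.val)
  unfold eshift
  split <;> split <;> omega


section Step2

variable {N m : ℕ} {a b' : List ℕ}
variable (ha : IsComposition a) (hb : IsComposition b')
  (hsa : a.sum = m) (hsb : b'.sum = N - 1) (hN : m + 2 ≤ N)

include ha hb hsa hsb hN in
lemma adj_step (u v : Fin (2*(N-1))) :
    (meanderC (N-1) a b').Adj u v ↔
      (meanderC N a (b' ++ [1])).Adj (gmap N u) (gmap N v) := by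
  show (u ≠ v ∧ _) ↔ ((gmap N u) ≠ (gmap N v) ∧ _)
  constructor
  · rintro ⟨h1, h2⟩
    refine ⟨fun h => h1 (gmap_inj N h), ?_⟩
    rcases h2 with h | h | h | h
    · exact Or.inl ((arcsA_step ha hsa hN).mp h)
    · exact Or.inr (Or.inl ((arcsA_step ha hsa hN).mp h))
    · exact Or.inr (Or.inr (Or.inl ((arcsB_step hb hsb hN).mp h)))
    · exact Or.inr (Or.inr (Or.inr ((arcsB_step hb hsb hN).mp h)))
  · rintro ⟨h1, h2⟩
    refine ⟨fun h => h1 (congrArg _ h), ?_⟩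
    rcases h2 with h | h | h | h
    · exact Or.inl ((arcsA_step ha hsa hN).mpr h)
    · exact Or.inr (Or.inl ((arcsA_step ha hsa hN).mpr h))
    · exact Or.inr (Or.inr (Or.inl ((arcsB_step hb hsb hN).mpr h)))
    · exact Or.inr (Or.inr (Or.inr ((arcsB_step hb hsb hN).mpr h)))

include ha hsa hN in
lemma arcsA_center {x y : ℕ} (h : arcs (tildeComp N a) 0 x y)
    (hc : x = N - 1 ∨ x = N ∨ y = N - 1 ∨ y = N) : x = N - 1 ∧ y = N := by
  have hrs : a.reverse.sum = m := by rw [List.sum_reverse]; exact hsa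
  rw [arcsA_decomp ha hsa (by omega)] at h
  rcases h with h | ⟨k, hk, hx, hy⟩ | h
  · have hbd := arcs_bounds h; rw [hsa] at hbd; omega
  · omega
  · have hbd := arcs_bounds h; rw [hrs] at hbd; omega

include hb hsb hN in
lemma arcsB_notcenter {x y : ℕ} (h : arcs (tildeComp N (b' ++ [1])) 0 x y) :
    x ≠ N - 1 ∧ x ≠ N ∧ y ≠ N - 1 ∧ y ≠ N := by
  have hb1 : IsComposition (b' ++ [1]) := by
    intro z hz
    rcases List.mem_append.mp hz with h' | h'
    · exact hb z h'
    · simp at h'; omega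
  have hs1 : (b' ++ [1]).sum = N := by simp [List.sum_append, hsb]; omega
  have hrs : b'.reverse.sum = N - 1 := by rw [List.sum_reverse]; exact hsb
  rw [arcsB_decomp hb1 hs1] at h
  have hrev : (b' ++ [1]).reverse = 1 :: b'.reverse := by simp
  rw [hrev] at h
  rcases h with h | h
  · rw [arcs_append] at h
    rcases h with h | h
    · have hbd := arcs_bounds h; rw [hsb] at hbd; omega
    · rw [show (0 : ℕ) + b'.sum = N - 1 by omega, arcs_singleton] at h
      exact absurd h inBlockArc_one
  · rcases h with h | h
    · exact absurd h inBlockArc_one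
    · have hbd := arcs_bounds h
      rw [show N + 1 + b'.reverse.sum = 2*N by omega] at hbd
      omega

include ha hb hsa hsb hN in
lemma adj_center_left (w : Fin (2*N)) (x : Fin (2*N)) (hx : x.val = N - 1) :
    (meanderC N a (b' ++ [1])).Adj x w ↔ w.val = N := by
  constructor
  · rintro ⟨h1, h2⟩
    rcases h2 with h | h | h | h
    · exact (arcsA_center ha hsa hN h (by omega)).2
    · have := arcsA_center ha hsa hN h (by omega); omega
    · have := arcsB_notcenter hb hsb hN h; omega
    · have := arcsB_notcenter hb hsb hN h; omega
  · intro hw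
    refine ⟨fun h => by rw [h] at hx; omega, Or.inl ?_⟩
    rw [arcsA_decomp ha hsa (by omega), hx, hw]
    exact Or.inr (Or.inl ⟨N - 1 - m, by omega, by omega, by omega⟩)

include ha hb hsa hsb hN in
lemma adj_center_right (w : Fin (2*N)) (x : Fin (2*N)) (hx : x.val = N) :
    (meanderC N a (b' ++ [1])).Adj x w ↔ w.val = N - 1 := by
  constructor
  · rintro ⟨h1, h2⟩
    rcases h2 with h | h | h | h
    · have := arcsA_center ha hsa hN h (by omega); omega
    · exact (arcsA_center ha hsa hN h (by omega)).1
    · have := arcsB_notcenter hb hsb hN h; omega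
    · have := arcsB_notcenter hb hsb hN h; omega
  · intro hw
    refine ⟨fun h => by rw [h] at hx; omega, Or.inr (Or.inl ?_)⟩
    rw [arcsA_decomp ha hsa (by omega), hx, hw]
    exact Or.inr (Or.inl ⟨N - 1 - m, by omega, by omega, by omega⟩)

include ha hb hsa hsb hN in
lemma gclosed : ∀ (v : Fin (2*(N-1))) (w : Fin (2*N)),
    (meanderC N a (b' ++ [1])).Adj (gmap N v) w → ∃ u, w = gmap N u := by
  intro v w h
  have hgc := gmap_ne_center (N := N) v
  have hw1 : w.val ≠ N - 1 := by
    intro hw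
    have := (adj_center_left ha hb hsa hsb hN (gmap N v) w hw).mp h.symm
    omega
  have hw2 : w.val ≠ N := by
    intro hw
    have := (adj_center_right ha hb hsa hsb hN (gmap N v) w hw).mp h.symm
    omega
  exact mem_range_gmap (by omega) w hw1 hw2

end Step2

section Step3

variable {N m : ℕ} {a b' : List ℕ}
variable (ha : IsComposition a) (hb : IsComposition b')
  (hsa : a.sum = m) (hsb : b'.sum = N - 1) (hN : m + 2 ≤ N)

include ha hb hsa hsb hN in
lemma out_ncard (x : Fin (2*N)) (hx : x ∉ Set.range (gmap N)) :
    ((meanderC N a (b' ++ [1])).neighborSet x).ncard ≠ 2 := by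
  have hcases : x.val = N - 1 ∨ x.val = N := by
    by_contra h
    push_neg at h
    obtain ⟨u, hu⟩ := mem_range_gmap (by omega) x h.1 h.2
    exact hx ⟨u, hu.symm⟩
  rcases hcases with hc | hc
  · have : (meanderC N a (b' ++ [1])).neighborSet x = {(⟨N, by omega⟩ : Fin (2*N))} := by
      ext y
      simp only [SimpleGraph.mem_neighborSet, Set.mem_singleton_iff]
      rw [adj_center_left ha hb hsa hsb hN y x hc, Fin.ext_iff]
    rw [this, Set.ncard_singleton]
    omega
  · have : (meanderC N a (b' ++ [1])).neighborSet x = {(⟨N - 1, by omega⟩ : Fin (2*N))} := by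
      ext y
      simp only [SimpleGraph.mem_neighborSet, Set.mem_singleton_iff]
      rw [adj_center_right ha hb hsa hsb hN y x hc, Fin.ext_iff]
    rw [this, Set.ncard_singleton]
    omega

include ha hb hsa hsb hN in
lemma out_stab (x : Fin (2*N)) (hx : x ∉ Set.range (gmap N)) :
    Stab (meanderC N a (b' ++ [1])) (sigmaRefl N)
      ((meanderC N a (b' ++ [1])).connectedComponentMk x) := by
  set G := meanderC N a (b' ++ [1]) with hG
  set S : Set (Fin (2*N)) := {y | y.val = N - 1 ∨ y.val = N} with hS
  have hxS : x ∈ S := by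
    by_contra h
    simp only [hS, Set.mem_setOf_eq] at h
    push_neg at h
    obtain ⟨u, hu⟩ := mem_range_gmap (by omega) x h.1 h.2
    exact hx ⟨u, hu.symm⟩
  have hSclosed : ∀ y ∈ S, ∀ w, G.Adj y w → w ∈ S := by
    rintro y (hy | hy) w hw
    · exact Or.inr ((adj_center_left ha hb hsa hsb hN w y hy).mp hw)
    · exact Or.inl ((adj_center_right ha hb hsa hsb hN w y hy).mp hw)
  have key : ∀ y z : Fin (2*N), y ∈ S → z ∈ S →
      G.connectedComponentMk y = G.connectedComponentMk z := by
    rintro y z (hy | hy) (hz | hz)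
    · rw [show y = z from Fin.ext (by omega)]
    · exact SimpleGraph.ConnectedComponent.sound
        ⟨SimpleGraph.Walk.cons ((adj_center_left ha hb hsa hsb hN z y hy).mpr hz)
          SimpleGraph.Walk.nil⟩
    · exact SimpleGraph.ConnectedComponent.sound
        ⟨SimpleGraph.Walk.cons ((adj_center_right ha hb hsa hsb hN z y hy).mpr hz)
          SimpleGraph.Walk.nil⟩
    · rw [show y = z from Fin.ext (by omega)]
  intro w hw
  have hreach : G.Reachable x w := SimpleGraph.ConnectedComponent.exact hw.symm
  have hwS : w ∈ S := reachable_closed hSclosed hxS hreach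
  have hσS : sigmaRefl N w ∈ S := by
    rcases hwS with h | h
    · exact Or.inr (by show 2*N - 1 - w.val = N; omega)
    · exact Or.inl (by show 2*N - 1 - w.val = N - 1; omega)
  exact key _ _ hσS hxS

include ha hb hsa hsb hN in
lemma numCycles_step :
    numCycles (meanderC N a (b' ++ [1])) = numCycles (meanderC (N-1) a b') :=
  cycles_transfer (gmap N) (gmap_inj N) (adj_step ha hb hsa hsb hN)
    (gclosed ha hb hsa hsb hN) (out_ncard ha hb hsa hsb hN)

include ha hb hsa hsb hN in
lemma numNonStable_step :
    numNonStableSegments N a (b' ++ [1]) = numNonStableSegments (N-1) a b' :=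
  nonstable_transfer (gmap N) (gmap_inj N) (adj_step ha hb hsa hsb hN)
    (gclosed ha hb hsa hsb hN) (fun v => sigma_gmap (by omega) v)
    (out_stab ha hb hsa hsb hN)

include ha hb hsa hsb hN in
lemma topIndex_step : topIndex N a (b' ++ [1]) = topIndex (N-1) a b' := by
  unfold topIndex
  rw [numCycles_step ha hb hsa hsb hN, numNonStable_step ha hb hsa hsb hN]

end Step3

/-! ### The last block of the long composition has size 1 -/

lemma topIndex_numCycles_zero {N : ℕ} {a b : List ℕ} (h : topIndex N a b = 0) :
    numCycles (meanderC N a b) = 0 := by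
  unfold topIndex at h
  have h1 : (0 : ℚ) ≤ (numCycles (meanderC N a b) : ℚ) := Nat.cast_nonneg _
  have h2 : (0 : ℚ) ≤ (numNonStableSegments N a b : ℚ) := Nat.cast_nonneg _
  have h3 : (numCycles (meanderC N a b) : ℚ) = 0 := by linarith
  exact_mod_cast h3

set_option maxHeartbeats 1000000 in
lemma last_one {N m : ℕ} {a b : List ℕ} (ha : IsComposition a) (hb : IsComposition b)
    (hsa : a.sum = m) (hsb : b.sum = N) (hN : 2*m + 2 ≤ N)
    (htop : topIndex N a b = 0) :
    ∃ b', b = b' ++ [1] ∧ IsComposition b' ∧ b'.sum = N - 1 := by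
  rcases List.eq_nil_or_concat b with rfl | ⟨b', s, hbc⟩
  · simp at hsb; omega
  rw [List.concat_eq_append] at hbc
  subst hbc
  have hbcomp' : IsComposition b' := fun x hx => hb x (List.mem_append.mpr (Or.inl hx))
  have hs : 0 < s := hb s (List.mem_append.mpr (Or.inr (by simp)))
  have hsum : b'.sum + s = N := by simpa [List.sum_append] using hsb
  by_cases hs1 : s = 1
  · exact ⟨b', by rw [hs1], hbcomp', by omega⟩
  -- now s ≥ 2; derive a contradiction
  exfalso
  have hs2 : 2 ≤ s := by omega
  have hc0 := topIndex_numCycles_zero htop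
  set G := meanderC N a (b' ++ [s]) with hG
  set k₀ := (s - 2)/2 with hk₀
  set i := N - s + k₀ with hi
  set j := N - 1 - k₀ with hj
  have hk : 2*k₀ + 1 < s := by omega
  have hsN : s ≤ N := by omega
  have hmi : m ≤ i := by omega
  have hij : i < j := by omega
  have hjN : j ≤ N - 1 := by omega
  -- the four relevant arcs
  have hA : tildeComp N a = a ++ [2*(N-m)] ++ a.reverse :=
    tildeComp_eq_mid ha hsa (by omega)
  have hBrev : (b' ++ [s]).reverse = s :: b'.reverse := by simp
  have hB1 : arcs (tildeComp N (b' ++ [s])) 0 i j := by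
    rw [arcsB_decomp hb hsb]
    refine Or.inl (arcs_append.mpr (Or.inr ?_))
    rw [show (0 : ℕ) + b'.sum = N - s by omega, arcs_singleton]
    exact ⟨k₀, hk, by omega, by omega⟩
  have hB2 : arcs (tildeComp N (b' ++ [s])) 0 (2*N - 1 - j) (2*N - 1 - i) := by
    rw [arcsB_decomp hb hsb]
    refine Or.inr ?_
    rw [hBrev]
    refine Or.inl ⟨k₀, hk, by omega, by omega⟩
  have hA1 : arcs (tildeComp N a) 0 i (2*N - 1 - i) := by
    rw [arcsA_decomp ha hsa (by omega)]
    exact Or.inr (Or.inl ⟨i - m, by omega, by omega, by omega⟩)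
  have hA2 : arcs (tildeComp N a) 0 j (2*N - 1 - j) := by
    rw [arcsA_decomp ha hsa (by omega)]
    exact Or.inr (Or.inl ⟨j - m, by omega, by omega, by omega⟩)
  -- vertices
  have h2N : 2*N = 2*N := rfl
  let vi : Fin (2*N) := ⟨i, by omega⟩
  let vj : Fin (2*N) := ⟨j, by omega⟩
  let vsi : Fin (2*N) := ⟨2*N - 1 - i, by omega⟩
  let vsj : Fin (2*N) := ⟨2*N - 1 - j, by omega⟩
  -- neighbour set computation
  have nb : ∀ (v pa pb : Fin (2*N)) (xa ya xb yb : ℕ),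
      arcs (tildeComp N a) 0 xa ya → arcs (tildeComp N (b' ++ [s])) 0 xb yb →
      (v.val = xa ∧ pa.val = ya ∨ v.val = ya ∧ pa.val = xa) →
      (v.val = xb ∧ pb.val = yb ∨ v.val = yb ∧ pb.val = xb) →
      G.neighborSet v = {pa, pb} := by
    intro v pa pb xa ya xb yb hAv hBv hva hvb
    have hbdA := arcs_bounds hAv
    have hbdB := arcs_bounds hBv
    ext w
    simp only [SimpleGraph.mem_neighborSet, Set.mem_insert_iff, Set.mem_singleton_iff]
    constructor
    · rintro ⟨hne, harc⟩
      rw [Fin.ext_iff, Fin.ext_iff]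
      rcases harc with h | h | h | h
      · have := arcs_unique h hAv (by omega)
        omega
      · have := arcs_unique h hAv (by omega)
        omega
      · have := arcs_unique h hBv (by omega)
        omega
      · have := arcs_unique h hBv (by omega)
        omega
    · intro hw
      have hwv : w.val = pa.val ∨ w.val = pb.val := by
        rcases hw with rfl | rfl
        · exact Or.inl rfl
        · exact Or.inr rfl
      refine ⟨fun h => by rw [h] at hva hvb; omega, ?_⟩
      rcases hwv with hw' | hw'
      · rcases hva with ⟨h1, h2⟩ | ⟨h1, h2⟩
        · exact Or.inl (by rw [h1, hw', h2]; exact hAv)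
        · exact Or.inr (Or.inl (by rw [h1, hw', h2]; exact hAv))
      · rcases hvb with ⟨h1, h2⟩ | ⟨h1, h2⟩
        · exact Or.inr (Or.inr (Or.inl (by rw [h1, hw', h2]; exact hBv)))
        · exact Or.inr (Or.inr (Or.inr (by rw [h1, hw', h2]; exact hBv)))
  have nbi : G.neighborSet vi = {vsi, vj} :=
    nb vi vsi vj i (2*N - 1 - i) i j hA1 hB1 (Or.inl ⟨rfl, rfl⟩) (Or.inl ⟨rfl, rfl⟩)
  have nbj : G.neighborSet vj = {vsj, vi} :=
    nb vj vsj vi j (2*N - 1 - j) i j hA2 hB1 (Or.inl ⟨rfl, rfl⟩) (Or.inr ⟨rfl, rfl⟩)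
  have nbsi : G.neighborSet vsi = {vi, vsj} :=
    nb vsi vi vsj i (2*N - 1 - i) (2*N - 1 - j) (2*N - 1 - i) hA1 hB2
      (Or.inr ⟨rfl, rfl⟩) (Or.inr ⟨rfl, rfl⟩)
  have nbsj : G.neighborSet vsj = {vj, vsi} :=
    nb vsj vj vsi j (2*N - 1 - j) (2*N - 1 - j) (2*N - 1 - i) hA2 hB2
      (Or.inr ⟨rfl, rfl⟩) (Or.inl ⟨rfl, rfl⟩)
  -- the component of vi is a cycle
  set S : Set (Fin (2*N)) := {vi, vj, vsi, vsj} with hSdef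
  have hScl : ∀ v ∈ S, ∀ w, G.Adj v w → w ∈ S := by
    intro v hv w hw
    have hw' : w ∈ G.neighborSet v := hw
    rw [hSdef] at hv ⊢
    simp only [Set.mem_insert_iff, Set.mem_singleton_iff] at hv ⊢
    rcases hv with rfl | rfl | rfl | rfl
    · rw [nbi] at hw'
      simp only [Set.mem_insert_iff, Set.mem_singleton_iff] at hw'
      rcases hw' with rfl | rfl <;> tauto
    · rw [nbj] at hw'
      simp only [Set.mem_insert_iff, Set.mem_singleton_iff] at hw'
      rcases hw' with rfl | rfl <;> tauto
    · rw [nbsi] at hw'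
      simp only [Set.mem_insert_iff, Set.mem_singleton_iff] at hw'
      rcases hw' with rfl | rfl <;> tauto
    · rw [nbsj] at hw'
      simp only [Set.mem_insert_iff, Set.mem_singleton_iff] at hw'
      rcases hw' with rfl | rfl <;> tauto
  have hcyc : IsCycleComp G (G.connectedComponentMk vi) := by
    intro w hw
    have hreach : G.Reachable vi w := SimpleGraph.ConnectedComponent.exact hw.symm
    have hwS : w ∈ S := reachable_closed hScl (by rw [hSdef]; simp) hreach
    rw [hSdef] at hwS
    simp only [Set.mem_insert_iff, Set.mem_singleton_iff] at hwS
    rcases hwS with rfl | rfl | rfl | rfl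
    · rw [nbi]; exact Set.ncard_pair (by rw [Fin.ne_iff_vne]; show 2*N-1-i ≠ j; omega)
    · rw [nbj]; exact Set.ncard_pair (by rw [Fin.ne_iff_vne]; show 2*N-1-j ≠ i; omega)
    · rw [nbsi]; exact Set.ncard_pair (by rw [Fin.ne_iff_vne]; show i ≠ 2*N-1-j; omega)
    · rw [nbsj]; exact Set.ncard_pair (by rw [Fin.ne_iff_vne]; show j ≠ 2*N-1-i; omega)
  -- contradiction with numCycles = 0
  unfold numCycles at hc0
  rw [Set.ncard_eq_zero (Set.toFinite _)] at hc0
  exact absurd hc0 (Set.nonempty_iff_ne_empty.mp ⟨_, hcyc⟩)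

/-! ### Counting -/

/-- Normalised Frobenius data: the first composition sums to `m`. -/
def QSet (N m : ℕ) : Set (List ℕ × List ℕ) :=
  {p | FrobDatum (N-1) ((N-1) - m) p.1 p.2 ∧ p.1.sum = m ∧ p.2.sum = N - 1}

lemma mem_QSet {N m : ℕ} {x y : List ℕ} (h : FrobDatum (N-1) ((N-1) - m) x y)
    (h1 : x.sum = m) (h2 : y.sum = N - 1) : (x, y) ∈ QSet N m := ⟨h, h1, h2⟩

lemma FSet_small_eq {N m : ℕ} (hN : 2*m + 2 ≤ N) :
    FSet (N-1) ((N-1) - m) = (fun p : List ℕ × List ℕ => s(p.1, p.2)) '' QSet N m := by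
  ext t
  simp only [FSet, Set.mem_setOf_eq, Set.mem_image]
  constructor
  · rintro ⟨x, y, rfl, hfd⟩
    obtain ⟨hx, hy, h1, h2, hsum, htop⟩ := hfd
    rcases hsum with ⟨hx', hy'⟩ | ⟨hy', hx'⟩
    · exact ⟨(x, y), mem_QSet ⟨hx, hy, h1, h2, Or.inl ⟨hx', hy'⟩, htop⟩ (by omega) hy', rfl⟩
    · refine ⟨(y, x), mem_QSet ⟨hy, hx, h1, h2, Or.inl ⟨hy', hx'⟩, by
        rw [topIndex_comm]; exact htop⟩ (by omega) hx', ?_⟩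
      exact (Sym2.eq_swap).symm
  · rintro ⟨⟨x, y⟩, ⟨hfd, hx, hy⟩, rfl⟩
    exact ⟨x, y, rfl, hfd⟩

lemma FSet_big_eq {N m : ℕ} (hN : 2*m + 2 ≤ N) :
    FSet N (N - m) = (fun p : List ℕ × List ℕ => s(p.1, p.2 ++ [1])) '' QSet N m := by
  ext t
  simp only [FSet, Set.mem_setOf_eq, Set.mem_image]
  constructor
  · rintro ⟨x, y, rfl, hx, hy, h1, h2, hsum, htop⟩
    rcases hsum with ⟨hx', hy'⟩ | ⟨hy', hx'⟩
    · have hxm : x.sum = m := by omega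
      obtain ⟨b', rfl, hb', hsb'⟩ := last_one hx hy hxm hy' hN htop
      rw [topIndex_step hx hb' hxm hsb' (by omega)] at htop
      exact ⟨(x, b'), mem_QSet ⟨hx, hb', by omega, by omega,
        Or.inl ⟨by omega, hsb'⟩, htop⟩ hxm hsb', rfl⟩
    · have hym : y.sum = m := by omega
      rw [topIndex_comm] at htop
      obtain ⟨b', rfl, hb', hsb'⟩ := last_one hy hx hym hx' hN htop
      rw [topIndex_step hy hb' hym hsb' (by omega)] at htop
      refine ⟨(y, b'), mem_QSet ⟨hy, hb', by omega, by omega,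
        Or.inl ⟨by omega, hsb'⟩, htop⟩ hym hsb', ?_⟩
      exact (Sym2.eq_swap).symm
  · rintro ⟨⟨x, y⟩, ⟨⟨hx, hy, _, _, hsum, htop⟩, hxm, hyN⟩, rfl⟩
    replace hxm : x.sum = m := hxm
    replace hyN : y.sum = N - 1 := hyN
    replace hx : IsComposition x := hx
    replace hy : IsComposition y := hy
    replace htop : topIndex (N-1) x y = 0 := htop
    have hy1 : IsComposition (y ++ [1]) := by
      intro z hz
      rcases List.mem_append.mp hz with h | h
      · exact hy z h
      · simp at h; omega
    refine ⟨x, y ++ [1], rfl, hx, hy1, by omega, by omega,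
      Or.inl ⟨by omega, by simp [List.sum_append]; omega⟩, ?_⟩
    rw [topIndex_step hx hy hxm hyN (by omega)]
    exact htop

lemma injOn_small {N m : ℕ} (hN : 2*m + 2 ≤ N) :
    Set.InjOn (fun p : List ℕ × List ℕ => s(p.1, p.2)) (QSet N m) := by
  rintro ⟨x1, y1⟩ ⟨_, hx1, hy1⟩ ⟨x2, y2⟩ ⟨_, hx2, hy2⟩ h
  replace hx1 : x1.sum = m := hx1
  replace hy1 : y1.sum = N - 1 := hy1
  replace hx2 : x2.sum = m := hx2
  replace hy2 : y2.sum = N - 1 := hy2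
  simp only [Sym2.eq_iff] at h
  rcases h with ⟨h1, h2⟩ | ⟨h1, h2⟩
  · rw [Prod.mk.injEq]; exact ⟨h1, h2⟩
  · exfalso
    rw [h1] at hx1
    omega

lemma injOn_big {N m : ℕ} (hN : 2*m + 2 ≤ N) :
    Set.InjOn (fun p : List ℕ × List ℕ => s(p.1, p.2 ++ [1])) (QSet N m) := by
  rintro ⟨x1, y1⟩ ⟨_, hx1, hy1⟩ ⟨x2, y2⟩ ⟨_, hx2, hy2⟩ h
  replace hx1 : x1.sum = m := hx1
  replace hy1 : y1.sum = N - 1 := hy1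
  replace hx2 : x2.sum = m := hx2
  replace hy2 : y2.sum = N - 1 := hy2
  simp only [Sym2.eq_iff] at h
  rcases h with ⟨h1, h2⟩ | ⟨h1, h2⟩
  · have h3 : y1 = y2 := by
      have := congrArg List.dropLast h2
      simpa using this
    rw [Prod.mk.injEq]; exact ⟨h1, h3⟩
  · exfalso
    have h3 : x1.sum = y2.sum + 1 := by rw [h1]; simp [List.sum_append]
    omega

lemma Fcount_step {N m : ℕ} (hN : 2*m + 2 ≤ N) :
    Fcount N (N - m) = Fcount (N-1) ((N-1) - m) := by
  unfold Fcount
  rw [FSet_big_eq hN, FSet_small_eq hN,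
    Set.ncard_image_of_injOn (injOn_big hN), Set.ncard_image_of_injOn (injOn_small hN)]


/-- For fixed `m`, the numbers `F_{n,n-m}` stabilise for `n ≥ 2m + 1`. -/
theorem Fcount_stabilises (m n : ℕ) (hn : 2 * m + 1 ≤ n) :
    Fcount n (n - m) = Fcount (2 * m + 1) (m + 1) := by
  induction n, hn using Nat.le_induction with
  | base => rw [show 2*m + 1 - m = m + 1 by omega]
  | succ n hn ih =>
    have h := Fcount_step (N := n + 1) (m := m) (by omega)
    rw [show n + 1 - 1 = n from rfl] at h
    exact h.trans ih
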